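/- Let M be an abelian group and f: G → H an M-tension-continuous mapping between finite directed graphs. If C is an M-unbalanced circuit in G, then the image f(C) ⊆ E(H) contains an M-unbalanced circuit. -/

import Mathlib

/-- A directed graph on vertex type `V`, given by its adjacency relation. -/
structure Dgraph (V : Type) where
  Adj : V → V → Prop

namespace Dgraph

variable {V : Type}

/-- The type of edges of a directed graph. -/
def Edge (D : Dgraph V) : Type := {p : V × V // D.Adj p.1 p.2}

def src {D : Dgraph V} (e : D.Edge) : V := e.1.1
def tgt {D : Dgraph V} (e : D.Edge) : V := e.1.2

/-- A closed walk of length `n+1`: at step `i` the edge `e i` is traversed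
forwards (if `dir i`) or backwards, from `v i` to `v (i+1)` (cyclically). -/
def IsClosedWalk (D : Dgraph V) {n : ℕ} (v : Fin (n + 1) → V)
    (e : Fin (n + 1) → D.Edge) (dir : Fin (n + 1) → Bool) : Prop :=
  ∀ i, if dir i then src (e i) = v i ∧ tgt (e i) = v (i + 1)
    else tgt (e i) = v i ∧ src (e i) = v (i + 1)

/-- A circuit: a closed walk with pairwise distinct vertices. -/
def IsCircuit (D : Dgraph V) {n : ℕ} (v : Fin (n + 1) → V)
    (e : Fin (n + 1) → D.Edge) (dir : Fin (n + 1) → Bool) : Prop :=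
  D.IsClosedWalk v e dir ∧ Function.Injective v

/-- An `M`-tension: the signed sum along every circuit vanishes. -/
def IsTension {M : Type} [AddCommGroup M] (D : Dgraph V) (τ : D.Edge → M) : Prop :=
  ∀ (n : ℕ) (v : Fin (n + 1) → V) (e : Fin (n + 1) → D.Edge) (dir : Fin (n + 1) → Bool),
    D.IsCircuit v e dir → ∑ i, (if dir i then τ (e i) else -τ (e i)) = 0

/-- `f : E(G) → E(H)` is `M`-tension-continuous if it lifts `M`-tensions to
`M`-tensions. -/
def TensionContinuous (M : Type) [AddCommGroup M] {V W : Type}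
    (G : Dgraph V) (H : Dgraph W) (f : G.Edge → H.Edge) : Prop :=
  ∀ τ : H.Edge → M, H.IsTension τ → G.IsTension (τ ∘ f)

end Dgraph


namespace Dgraph
variable {W : Type} {H : Dgraph W}


def stepSrc (p : H.Edge × Bool) : W := if p.2 then src p.1 else tgt p.1
def stepTgt (p : H.Edge × Bool) : W := if p.2 then tgt p.1 else src p.1
def revStep (p : H.Edge × Bool) : H.Edge × Bool := (p.1, !p.2)

def IsWalkL (H : Dgraph W) : W → W → List (H.Edge × Bool) → Prop
  | a, b, [] => a = b
  | a, b, p :: l => stepSrc p = a ∧ H.IsWalkL (stepTgt p) b l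

def sgnL (l : List (H.Edge × Bool)) : ℤ := (l.map fun p => if p.2 then (1:ℤ) else -1).sum

@[simp] lemma sgnL_nil : sgnL ([] : List (H.Edge × Bool)) = 0 := rfl

@[simp] lemma sgnL_cons (p : H.Edge × Bool) (l) : sgnL (p :: l) = (if p.2 then (1:ℤ) else -1) + sgnL l := rfl

@[simp] lemma sgnL_append (l₁ l₂ : List (H.Edge × Bool)) : sgnL (l₁ ++ l₂) = sgnL l₁ + sgnL l₂ := by
  simp [sgnL]

@[simp] lemma stepSrc_revStep (p : H.Edge × Bool) : stepSrc (revStep p) = stepTgt p := by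
  cases hp : p.2 <;> simp [stepSrc, stepTgt, revStep, hp]

@[simp] lemma stepTgt_revStep (p : H.Edge × Bool) : stepTgt (revStep p) = stepSrc p := by
  cases hp : p.2 <;> simp [stepSrc, stepTgt, revStep, hp]

lemma sgnL_revWalk (l : List (H.Edge × Bool)) : sgnL (l.reverse.map revStep) = - sgnL l := by
  induction l with
  | nil => simp
  | cons p t ih => cases hp : p.2 <;> simp [sgnL, revStep, hp] at * <;> omega

lemma walk_append {a b c : W} {l₁ l₂ : List (H.Edge × Bool)}
    (h₁ : H.IsWalkL a b l₁) (h₂ : H.IsWalkL b c l₂) : H.IsWalkL a c (l₁ ++ l₂) := by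
  induction l₁ generalizing a with
  | nil => cases h₁; simpa using h₂
  | cons p t ih => exact ⟨h₁.1, ih h₁.2⟩

lemma walk_split {a c : W} {l₁ l₂ : List (H.Edge × Bool)}
    (h : H.IsWalkL a c (l₁ ++ l₂)) : ∃ b, H.IsWalkL a b l₁ ∧ H.IsWalkL b c l₂ := by
  induction l₁ generalizing a with
  | nil => exact ⟨a, rfl, h⟩
  | cons p t ih =>
    obtain ⟨b, hb1, hb2⟩ := ih h.2
    exact ⟨b, ⟨h.1, hb1⟩, hb2⟩

lemma walk_reverse {a b : W} {l : List (H.Edge × Bool)} (h : H.IsWalkL a b l) :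
    H.IsWalkL b a (l.reverse.map revStep) := by
  induction l generalizing a with
  | nil => cases h; rfl
  | cons p t ih =>
    simp only [List.reverse_cons, List.map_append, List.map_cons, List.map_nil]
    refine walk_append (ih h.2) ⟨by simp, ?_⟩
    rw [show stepTgt (revStep p) = stepSrc p from by simp]
    exact h.1

lemma walk_first {a b : W} {l : List (H.Edge × Bool)} (h : H.IsWalkL a b l)
    (hl : 0 < l.length) : stepSrc (l[0]'hl) = a := by
  cases l with
  | nil => simp at hl
  | cons p t => exact h.1

lemma walk_last {a b : W} {l : List (H.Edge × Bool)} (h : H.IsWalkL a b l)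
    (hl : 0 < l.length) : stepTgt (l[l.length - 1]'(by omega)) = b := by
  induction l generalizing a with
  | nil => simp at hl
  | cons p t ih =>
    cases t with
    | nil => exact h.2
    | cons q t' =>
      have := ih h.2 (by simp)
      simpa using this

lemma walk_chain {a b : W} {l : List (H.Edge × Bool)} (h : H.IsWalkL a b l)
    (i : ℕ) (hi : i + 1 < l.length) :
    stepTgt (l[i]'(by omega)) = stepSrc (l[i+1]'hi) := by
  induction l generalizing a i with
  | nil => simp at hi
  | cons p t ih =>
    cases i with
    | zero =>
      cases t with
      | nil => simp at hi
      | cons q t' => simpa using (h.2.1).symm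
    | succ i' => simpa using ih h.2 i' (by simpa using hi)

lemma walk_splitAt {a b : W} {l : List (H.Edge × Bool)} (h : H.IsWalkL a b l)
    {i : ℕ} (hi : i < l.length) :
    H.IsWalkL a (stepSrc (l[i]'hi)) (l.take i) ∧ H.IsWalkL (stepSrc (l[i]'hi)) b (l.drop i) := by
  have h' : H.IsWalkL a b (l.take i ++ l.drop i) := by rwa [List.take_append_drop]
  obtain ⟨c, h1, h2⟩ := walk_split h'
  have hd : 0 < (l.drop i).length := by simp; omega
  have hc : stepSrc ((l.drop i)[0]'hd) = c := walk_first h2 hd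
  have : (l.drop i)[0]'hd = l[i]'hi := by simp
  rw [this] at hc
  subst hc; exact ⟨h1, h2⟩



lemma sum_pm {N : ℕ} (b : Fin N → Bool) :
    ∑ i, (if b i then (1:ℤ) else -1) =
      ((Finset.univ.filter fun i => b i = true).card : ℤ) -
      ((Finset.univ.filter fun i => b i = false).card : ℤ) := by
  rw [Finset.sum_ite, Finset.sum_const, Finset.sum_const]
  simp [sub_eq_add_neg]

lemma sgnL_eq_sum (l : List (H.Edge × Bool)) :
    sgnL l = ∑ i : Fin l.length, (if (l[(i:ℕ)]'i.isLt).2 then (1:ℤ) else -1) := by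
  rw [sgnL]
  conv_lhs => rw [← List.ofFn_getElem (xs := l), List.map_ofFn, List.sum_ofFn]
  rfl

lemma closedWalk_sgn_smul {M : Type} [AddCommGroup M] {H : Dgraph W} (S : Set H.Edge) (m : M)
    (Hbal : ∀ (k : ℕ) (v : Fin (k+1) → W) (e : Fin (k+1) → H.Edge) (dir : Fin (k+1) → Bool),
      H.IsCircuit v e dir → (∀ i, e i ∈ S) →
      (∑ i, (if dir i then (1:ℤ) else -1)) • m = 0) :
    ∀ (N : ℕ) (l : List (H.Edge × Bool)) (a : W), l.length ≤ N →
      H.IsWalkL a a l → (∀ p ∈ l, p.1 ∈ S) → sgnL l • m = 0 := by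
  intro N
  induction N with
  | zero =>
    intro l a hl _ _
    have : l = [] := List.length_eq_zero_iff.mp (by omega)
    subst this; simp
  | succ N ih =>
    intro l a hl hw hS
    rcases l with _ | ⟨p, t⟩
    · simp
    by_cases hnd : ((p :: t).map stepSrc).Nodup
    · -- injective vertices: it is a circuit
      let ev : Fin (t.length+1) → H.Edge := fun i => ((p :: t)[(i:ℕ)]'(i.isLt)).1
      let dv : Fin (t.length+1) → Bool := fun i => ((p :: t)[(i:ℕ)]'(i.isLt)).2
      let vv : Fin (t.length+1) → W := fun i => stepSrc ((p :: t)[(i:ℕ)]'(i.isLt))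
      have hstep : ∀ i : Fin (t.length+1), stepTgt ((p :: t)[(i:ℕ)]'(i.isLt)) = vv (i+1) := by
        intro i
        by_cases hik : (i:ℕ) < t.length
        · have hv : ((i+1 : Fin (t.length+1)) : ℕ) = (i:ℕ)+1 :=
            Fin.val_add_one_of_lt (by rw [Fin.lt_iff_val_lt_val, Fin.val_last]; exact hik)
          have hc := walk_chain hw (i:ℕ) (by simp; omega)
          rw [hc]
          show stepSrc _ = stepSrc ((p :: t)[((i+1 : Fin (t.length+1)):ℕ)]'(i+1).isLt)
          congr 1
          simp [hv]
        · have hik' : (i:ℕ) = t.length := by omega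
          have hv : ((i+1 : Fin (t.length+1)) : ℕ) = 0 := by
            have hlast : i = Fin.last t.length := by
              apply Fin.ext; simpa using hik'
            rw [hlast]; simp
          have h1 : stepTgt ((p :: t)[(i:ℕ)]'(i.isLt)) = a := by
            have hwl := walk_last hw (l := p :: t) (by simp)
            have hidx : (p :: t).length - 1 = (i:ℕ) := by simp [hik']
            rw [← hwl]
            congr 1
            simp [hik']
          have h2 : vv (i+1) = a := by
            show stepSrc ((p :: t)[((i+1 : Fin (t.length+1)):ℕ)]'(i+1).isLt) = a
            have h0 : stepSrc ((p :: t)[0]'(by simp)) = a := walk_first hw (by simp)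
            rw [← h0]
            congr 1
            simp [hv]
          rw [h1, h2]
      have hcw : H.IsClosedWalk vv ev dv := by
        intro i
        by_cases hd : dv i
        · rw [if_pos hd]
          constructor
          · show src ((p :: t)[(i:ℕ)]'(i.isLt)).1 = stepSrc ((p :: t)[(i:ℕ)]'(i.isLt))
            simp only [stepSrc]
            rw [if_pos hd]
          · rw [← hstep i]
            show tgt ((p :: t)[(i:ℕ)]'(i.isLt)).1 = stepTgt ((p :: t)[(i:ℕ)]'(i.isLt))
            simp only [stepTgt]
            rw [if_pos hd]
        · rw [if_neg hd]
          constructor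
          · show tgt ((p :: t)[(i:ℕ)]'(i.isLt)).1 = stepSrc ((p :: t)[(i:ℕ)]'(i.isLt))
            simp only [stepSrc]
            rw [if_neg hd]
          · rw [← hstep i]
            show src ((p :: t)[(i:ℕ)]'(i.isLt)).1 = stepTgt ((p :: t)[(i:ℕ)]'(i.isLt))
            simp only [stepTgt]
            rw [if_neg hd]
      have hinj : Function.Injective vv := by
        intro i j hij
        have hli : (i:ℕ) < (((p :: t)).map stepSrc).length := by simpa using i.isLt
        have hlj : (j:ℕ) < (((p :: t)).map stepSrc).length := by simpa using j.isLt
        have hget : ((p :: t).map stepSrc).get ⟨i, hli⟩ = ((p :: t).map stepSrc).get ⟨j, hlj⟩ := by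
          simp only [List.get_eq_getElem, List.getElem_map]
          exact hij
        have hmk := List.nodup_iff_injective_get.mp hnd hget
        exact Fin.ext (by simpa using congrArg Fin.val hmk)
      have hSin : ∀ i, ev i ∈ S := fun i => hS _ (List.getElem_mem _)
      have hB := Hbal t.length vv ev dv ⟨hcw, hinj⟩ hSin
      rw [sgnL_eq_sum]
      exact hB
    · -- a repeated vertex: split the walk
      have hninj : ¬ Function.Injective ((p :: t).map stepSrc).get := fun h => hnd (List.nodup_iff_injective_get.mpr h)
      rw [Function.not_injective_iff] at hninj
      obtain ⟨i, j, hij, hne⟩ := hninj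
      obtain ⟨i', j', hlt, heq⟩ : ∃ i' j' : ℕ, i' < j' ∧
          (∃ hi : i' < (p :: t).length, ∃ hj : j' < (p :: t).length,
            stepSrc ((p :: t)[i']'hi) = stepSrc ((p :: t)[j']'hj)) := by
        rcases lt_or_gt_of_ne (fun h => hne (Fin.ext h) : (i:ℕ) ≠ (j:ℕ)) with h | h
        · exact ⟨i, j, h, by simpa using i.isLt, by simpa using j.isLt, by
            simpa only [List.get_eq_getElem, List.getElem_map] using hij⟩
        · exact ⟨j, i, h, by simpa using j.isLt, by simpa using i.isLt, by
            simpa only [List.get_eq_getElem, List.getElem_map] using hij.symm⟩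
      obtain ⟨hi', hj', hveq⟩ := heq
      have hsplit1 := walk_splitAt hw hj'
      set c := stepSrc ((p :: t)[j']'hj') with hcdef
      have hj'' : j' < t.length + 1 := by simpa using hj'
      have hl' : t.length + 1 ≤ N + 1 := by simpa using hl
      have htk : i' < ((p :: t).take j').length := by
        rw [List.length_take, List.length_cons]; omega
      have hsplit2 := walk_splitAt hsplit1.1 htk
      have hgetkeq : stepSrc (((p :: t).take j')[i']'htk) = c := by
        rw [← hveq]
        congr 1
        simp [List.getElem_take]
      rw [hgetkeq] at hsplit2
      have hmid : H.IsWalkL c c (((p :: t).take j').drop i') := hsplit2.2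
      have hout : H.IsWalkL a a ((p :: t).take i' ++ (p :: t).drop j') := by
        have h1 : H.IsWalkL a c ((p :: t).take i') := by
          have h2 := hsplit2.1
          rwa [List.take_take, min_eq_left (le_of_lt hlt)] at h2
        exact walk_append h1 hsplit1.2
      have hmidlen : (((p :: t).take j').drop i').length ≤ N := by
        rw [List.length_drop, List.length_take, List.length_cons]
        omega
      have houtlen : ((p :: t).take i' ++ (p :: t).drop j').length ≤ N := by
        rw [List.length_append, List.length_take, List.length_drop, List.length_cons]
        omega
      have hmidS : ∀ q ∈ ((p :: t).take j').drop i', q.1 ∈ S := fun q hq =>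
        hS q (List.take_subset _ _ (List.drop_subset _ _ hq))
      have houtS : ∀ q ∈ (p :: t).take i' ++ (p :: t).drop j', q.1 ∈ S := by
        intro q hq
        rcases List.mem_append.mp hq with h | h
        exacts [hS q (List.take_subset _ _ h), hS q (List.drop_subset _ _ h)]
      have hm1 := ih _ _ hmidlen hmid hmidS
      have hm2 := ih _ _ houtlen hout houtS
      have hsg : sgnL (p :: t) = sgnL ((p :: t).take i' ++ (p :: t).drop j')
          + sgnL (((p :: t).take j').drop i') := by
        conv_lhs => rw [← List.take_append_drop j' (p :: t)]
        conv_lhs => rw [show (p :: t).take j' = ((p :: t).take j').take i' ++ ((p :: t).take j').drop i'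
          from (List.take_append_drop i' ((p :: t).take j')).symm]
        rw [List.take_take, min_eq_left (le_of_lt hlt)]
        simp only [sgnL_append]
        ring
      rw [hsg, add_smul, hm1, hm2, add_zero]

lemma potential_tension {M : Type} [AddCommGroup M] (H : Dgraph W) (p : W → M) :
    H.IsTension (fun x => p (tgt x) - p (src x)) := by
  intro n v e dir hC
  have h1 : ∀ i : Fin (n+1), (if dir i then p (tgt (e i)) - p (src (e i))
      else -(p (tgt (e i)) - p (src (e i)))) = p (v (i+1)) - p (v i) := by
    intro i
    have hc := hC.1 i
    by_cases hd : dir i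
    · rw [if_pos hd] at hc ⊢
      rw [hc.1, hc.2]
    · rw [if_neg hd] at hc ⊢
      rw [hc.1, hc.2]
      abel
  calc ∑ i, (if dir i then p (tgt (e i)) - p (src (e i))
        else -(p (tgt (e i)) - p (src (e i))))
      = ∑ i : Fin (n+1), (p (v (i+1)) - p (v i)) := Finset.sum_congr rfl fun i _ => h1 i
    _ = 0 := by
        rw [Finset.sum_sub_distrib, sub_eq_zero]
        exact Fintype.sum_equiv (Equiv.addRight 1) _ _ (fun i => rfl)

end Dgraph

/-- A circuit (given by its direction pattern) is `M`-balanced if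
`(|C⁺| - |C⁻|) • m = 0` for every `m : M`. -/
def BalancedDir (M : Type) [AddCommGroup M] {n : ℕ} (dir : Fin (n + 1) → Bool) : Prop :=
  ∀ m : M, (((Finset.univ.filter fun i => dir i = true).card : ℤ) -
      ((Finset.univ.filter fun i => dir i = false).card : ℤ)) • m = 0

/-- the image (under an `M`-tension-continuous map) of an
`M`-unbalanced circuit contains an `M`-unbalanced circuit. -/
theorem image_of_unbalanced_circuit {M : Type} [AddCommGroup M]
    {V W : Type} [Fintype V] [Fintype W]
    (G : Dgraph V) (H : Dgraph W) (f : G.Edge → H.Edge)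
    (hf : Dgraph.TensionContinuous M G H f)
    {n : ℕ} (v : Fin (n + 1) → V) (e : Fin (n + 1) → G.Edge)
    (dir : Fin (n + 1) → Bool)
    (hC : G.IsCircuit v e dir) (hunbal : ¬ BalancedDir M dir) :
    ∃ (m : ℕ) (v' : Fin (m + 1) → W) (e' : Fin (m + 1) → H.Edge)
      (dir' : Fin (m + 1) → Bool),
      H.IsCircuit v' e' dir' ∧ ¬ BalancedDir M dir' ∧
      ∀ i : Fin (m + 1), ∃ j : Fin (n + 1), e' i = f (e j) := by
  classical
  by_contra hcon
  push_neg at hcon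
  simp only [BalancedDir, not_forall] at hunbal
  obtain ⟨m, hm⟩ := hunbal
  set S : Set H.Edge := {x | ∃ j, x = f (e j)} with hSdef
  have Hbal : ∀ (k : ℕ) (v' : Fin (k+1) → W) (e' : Fin (k+1) → H.Edge) (dir' : Fin (k+1) → Bool),
      H.IsCircuit v' e' dir' → (∀ i, e' i ∈ S) →
      (∑ i, (if dir' i then (1:ℤ) else -1)) • m = 0 := by
    intro k v' e' dir' hc hSall
    by_cases hb : BalancedDir M dir'
    · rw [Dgraph.sum_pm]
      exact hb m
    · obtain ⟨i, hi⟩ := hcon k v' e' dir' hc hb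
      obtain ⟨j, hj⟩ := hSall i
      exact absurd hj (hi j)
  -- reachability within S
  let Reach : W → W → Prop := fun a b => ∃ l, H.IsWalkL a b l ∧ ∀ q ∈ l, q.1 ∈ S
  have hrefl : ∀ a, Reach a a := fun a => ⟨[], rfl, by simp⟩
  have hsymm : ∀ {a b}, Reach a b → Reach b a := by
    rintro a b ⟨l, hwk, hS'⟩
    refine ⟨l.reverse.map Dgraph.revStep, Dgraph.walk_reverse hwk, ?_⟩
    intro q hq
    rw [List.mem_map] at hq
    obtain ⟨x, hx, rfl⟩ := hq
    exact hS' x (List.mem_reverse.mp hx)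
  have htrans : ∀ {a b c}, Reach a b → Reach b c → Reach a c := by
    rintro a b c ⟨l₁, h1, hS1⟩ ⟨l₂, h2, hS2⟩
    refine ⟨l₁ ++ l₂, Dgraph.walk_append h1 h2, ?_⟩
    intro q hq
    rcases List.mem_append.mp hq with h | h
    exacts [hS1 q h, hS2 q h]
  letI sd : Setoid W := ⟨Reach, ⟨hrefl, hsymm, htrans⟩⟩
  let rep : W → W := fun w => (Quotient.mk sd w).out
  have hrep : ∀ w, Reach (rep w) w := fun w => Quotient.mk_out w
  have hrepeq : ∀ {a b}, Reach a b → rep a = rep b := fun h =>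
    congrArg Quotient.out (Quotient.sound h)
  let p : W → M := fun w => (Dgraph.sgnL (hrep w).choose) • m
  have hkey : ∀ x : H.Edge, x ∈ S → p (Dgraph.tgt x) - p (Dgraph.src x) = m := by
    intro x hx
    have hab : Reach (Dgraph.src x) (Dgraph.tgt x) :=
      ⟨[(x, true)], ⟨rfl, rfl⟩, by simpa using hx⟩
    have hre : rep (Dgraph.src x) = rep (Dgraph.tgt x) := hrepeq hab
    obtain ⟨hw₁, hS₁⟩ := (hrep (Dgraph.src x)).choose_spec
    obtain ⟨hw₂, hS₂⟩ := (hrep (Dgraph.tgt x)).choose_spec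
    set l₁ := (hrep (Dgraph.src x)).choose
    set l₂ := (hrep (Dgraph.tgt x)).choose
    have hwL : H.IsWalkL (rep (Dgraph.src x))
        (rep (Dgraph.src x)) (l₁ ++ [(x, true)] ++ l₂.reverse.map Dgraph.revStep) := by
      refine Dgraph.walk_append (Dgraph.walk_append hw₁ ⟨rfl, rfl⟩) ?_
      rw [hre]
      exact Dgraph.walk_reverse hw₂
    have hSL : ∀ q ∈ l₁ ++ [(x, true)] ++ l₂.reverse.map Dgraph.revStep, q.1 ∈ S := by
      intro q hq
      rcases List.mem_append.mp hq with h | h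
      · rcases List.mem_append.mp h with h' | h'
        · exact hS₁ q h'
        · simp at h'; subst h'; exact hx
      · rw [List.mem_map] at h
        obtain ⟨y, hy, rfl⟩ := h
        exact hS₂ y (List.mem_reverse.mp hy)
    have h0 := Dgraph.closedWalk_sgn_smul S m Hbal _ _ _ (le_refl _) hwL hSL
    rw [Dgraph.sgnL_append, Dgraph.sgnL_append, Dgraph.sgnL_revWalk] at h0
    have h1 : Dgraph.sgnL [(x, true)] = 1 := by simp [Dgraph.sgnL]
    rw [h1] at h0
    show Dgraph.sgnL l₂ • m - Dgraph.sgnL l₁ • m = m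
    have h2 : -((Dgraph.sgnL l₁ + 1 + -Dgraph.sgnL l₂) • m)
        = Dgraph.sgnL l₂ • m - Dgraph.sgnL l₁ • m - m := by
      rw [← neg_smul, show -(Dgraph.sgnL l₁ + 1 + -Dgraph.sgnL l₂)
        = Dgraph.sgnL l₂ - Dgraph.sgnL l₁ - 1 by ring, sub_smul, sub_smul, one_smul]
    have h3 : Dgraph.sgnL l₂ • m - Dgraph.sgnL l₁ • m - m = 0 := by
      rw [← h2, h0, neg_zero]
    linear_combination (norm := abel) h3
  have ht : H.IsTension (fun x => p (Dgraph.tgt x) - p (Dgraph.src x)) :=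
    Dgraph.potential_tension H p
  have hGt := hf _ ht n v e dir hC
  have hsum : (∑ i : Fin (n+1), (if dir i then (1:ℤ) else -1)) • m = 0 := by
    rw [Finset.sum_smul, ← hGt]
    refine Finset.sum_congr rfl fun i _ => ?_
    have hv : p (Dgraph.tgt (f (e i))) - p (Dgraph.src (f (e i))) = m :=
      hkey (f (e i)) ⟨i, rfl⟩
    by_cases hd : dir i
    · simp only [hd, if_true, Function.comp_apply, one_smul, hv]
    · simp only [hd, if_false, Function.comp_apply, neg_smul, one_smul, hv, Bool.false_eq_true]
  rw [Dgraph.sum_pm] at hsum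
  exact hm hsum
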